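/- With ι_I and ι₃ the mixed-radix index transforms for radices I and (3,…,3), and β(w,l) := ι_I⁻¹(ι_I(w) + ι₃(l) − 2̲) (defined when the argument lies in [1̲,I̲]): if a particle with position x is assigned, on process β(w,l), to compartment α = ι₃⁻¹(4̲ − ι₃(l)), i.e., ι₃⁻¹(4̲ − ι₃(l)) = ι₃⁻¹(⌊(x − D_min)/r_c⌋ − ι_I(β(w,l)) + 3̲), then w = ι_I⁻¹(⌊(x − D_min)/r_c⌋ + 1̲). That is, the collect operation places each redistributed particle into exactly the process owning the cell containing its position. -/

import Mathlib

def prodIio {d : ℕ} (I : Fin d → ℕ) (l : Fin d) : ℕ := ∏ t ∈ Finset.Iio l, I t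

/-- vectorial index of a scalar index `j` (mixed-radix digits, offset by 1). -/
def iotaVec {d : ℕ} (I : Fin d → ℕ) (j : ℕ) (l : Fin d) : ℕ :=
  if l.val = d - 1 then (j - 1) / prodIio I l + 1
  else (j - 1) / prodIio I l - (j - 1) / (prodIio I l * I l) * I l + 1

/-- scalar index of a vectorial index. -/
def iotaInv {d : ℕ} (I : Fin d → ℕ) (v : Fin d → ℕ) : ℕ :=
  1 + ∑ l, (v l - 1) * prodIio I l


def iota3 (d : ℕ) (k : ℕ) : Fin d → ℕ := iotaVec (fun _ => 3) k

def kIstar {d : ℕ} (I : Fin d → ℕ) (k : ℕ) (w : Fin d) : ℕ := (I w + 3 - iota3 d k w) / 3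

def gamma {d : ℕ} (I : Fin d → ℕ) (k j : ℕ) : ℕ :=
  iotaInv I (fun w => 3 * iotaVec (kIstar I k) j w + iota3 d k w - 3)

def betaVec {d : ℕ} (I : Fin d → ℕ) (t l : ℕ) (w : Fin d) : ℕ :=
  iotaVec I t w + iota3 d l w - 2

def betaDef {d : ℕ} (I : Fin d → ℕ) (t l : ℕ) : Prop :=
  ∀ w, 1 ≤ betaVec I t l w ∧ betaVec I t l w ≤ I w

def beta {d : ℕ} (I : Fin d → ℕ) (t l : ℕ) : ℕ := iotaInv I (betaVec I t l)

/-- scalar index of an integer vectorial index, for radices R. -/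
def iotaInvZ {d : ℕ} (R : Fin d → ℕ) (v : Fin d → ℤ) : ℤ :=
  1 + ∑ l, (v l - 1) * ∏ t ∈ Finset.Iio l, (R t : ℤ)

namespace Stmt14Aux

def Q (J : ℕ → ℕ) (m : ℕ) : ℕ := ∏ t ∈ Finset.range m, J t

lemma Q_pos {J : ℕ → ℕ} (hJ : ∀ t, 1 ≤ J t) (m : ℕ) : 0 < Q J m :=
  Finset.prod_pos fun t _ => hJ t

lemma Q_succ (J : ℕ → ℕ) (m : ℕ) : Q J (m + 1) = Q J m * J m :=
  Finset.prod_range_succ J m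

lemma modsum (J : ℕ → ℕ) (a : ℕ) :
    ∀ m, a % Q J m = ∑ u ∈ Finset.range m, (a / Q J u % J u) * Q J u := by
  intro m
  induction m with
  | zero => simp [Q, Nat.mod_one]
  | succ m ih =>
      rw [Q_succ, Nat.mod_mul, Finset.sum_range_succ, ← ih, mul_comm]

lemma L_lt {J b : ℕ → ℕ} (hJ : ∀ t, 1 ≤ J t) (m : ℕ) (hb : ∀ t < m, b t < J t) :
    ∑ t ∈ Finset.range m, b t * Q J t < Q J m := by
  induction m with
  | zero => simpa [Q] using Nat.one_pos
  | succ m ih =>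
      rw [Finset.sum_range_succ, Q_succ]
      have h1 : ∑ t ∈ Finset.range m, b t * Q J t < Q J m :=
        ih fun t ht => hb t (Nat.lt_succ_of_lt ht)
      have h2 : b m + 1 ≤ J m := hb m (Nat.lt_succ_self m)
      calc ∑ t ∈ Finset.range m, b t * Q J t + b m * Q J m
          < Q J m + b m * Q J m := by omega
        _ = Q J m * (b m + 1) := by ring
        _ ≤ Q J m * J m := Nat.mul_le_mul_left _ h2

lemma div_decomp {J b : ℕ → ℕ} (hJ : ∀ t, 1 ≤ J t) {n m : ℕ} (hm : m < n)
    (hb : ∀ t < m, b t < J t) :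
    (∑ t ∈ Finset.range n, b t * Q J t) / Q J m
      = b m + J m * ∑ t ∈ Finset.Ico (m+1) n, b t * ∏ s ∈ Finset.Ico (m+1) t, J s := by
  have hQpos := Q_pos hJ m
  have hsplit : ∑ t ∈ Finset.range n, b t * Q J t
      = (∑ t ∈ Finset.range m, b t * Q J t)
        + Q J m * (b m + J m * ∑ t ∈ Finset.Ico (m+1) n, b t * ∏ s ∈ Finset.Ico (m+1) t, J s) := by
    have h1 : ∑ t ∈ Finset.range (m+1), b t * Q J t
        + ∑ t ∈ Finset.Ico (m+1) n, b t * Q J t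
        = ∑ t ∈ Finset.range n, b t * Q J t := by
      rw [Finset.range_eq_Ico]
      rw [Finset.sum_Ico_consecutive _ (Nat.zero_le _) hm]
      rw [Finset.range_eq_Ico]
    rw [← h1, Finset.sum_range_succ]
    have h2 : ∀ t ∈ Finset.Ico (m+1) n, b t * Q J t
        = Q J m * J m * (b t * ∏ s ∈ Finset.Ico (m+1) t, J s) := by
      intro t ht
      have htm : m + 1 ≤ t := (Finset.mem_Ico.mp ht).1
      have : Q J t = Q J (m+1) * ∏ s ∈ Finset.Ico (m+1) t, J s := by
        rw [Q, ← Finset.prod_range_mul_prod_Ico J htm]; rfl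
      rw [this, Q_succ]; ring
    rw [Finset.sum_congr rfl h2, ← Finset.mul_sum]
    ring
  rw [hsplit, Nat.add_mul_div_left _ _ hQpos,
    Nat.div_eq_of_lt (L_lt hJ m hb), zero_add]

lemma div_mod_digit {J b : ℕ → ℕ} (hJ : ∀ t, 1 ≤ J t) {n m : ℕ} (hm : m < n)
    (hb : ∀ t < n, b t < J t) :
    (∑ t ∈ Finset.range n, b t * Q J t) / Q J m % J m = b m := by
  rw [div_decomp hJ hm (fun t ht => hb t (ht.trans hm))]
  rw [Nat.add_mul_mod_self_left, Nat.mod_eq_of_lt (hb m hm)]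

lemma div_top_digit {J b : ℕ → ℕ} (hJ : ∀ t, 1 ≤ J t) {n : ℕ} (hn : 0 < n)
    (hb : ∀ t < n - 1, b t < J t) :
    (∑ t ∈ Finset.range n, b t * Q J t) / Q J (n-1) = b (n-1) := by
  have hm : n - 1 < n := by omega
  rw [div_decomp hJ hm hb]
  have : n - 1 + 1 = n := by omega
  rw [this, Finset.Ico_self, Finset.sum_empty, Nat.mul_zero, Nat.add_zero]

/-- uniqueness of base-3 integer digits in [0,3). -/
lemma int_digits_inj : ∀ (n : ℕ) (b b' : ℕ → ℤ),
    (∀ t < n, 0 ≤ b t ∧ b t < 3) → (∀ t < n, 0 ≤ b' t ∧ b' t < 3) →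
    (∑ t ∈ Finset.range n, b t * 3 ^ t = ∑ t ∈ Finset.range n, b' t * 3 ^ t) →
    ∀ t < n, b t = b' t := by
  intro n
  induction n with
  | zero => intro b b' _ _ _ t ht; omega
  | succ n ih =>
      intro b b' hb hb' hsum t ht
      have e : ∀ (c : ℕ → ℤ), ∑ t ∈ Finset.range (n+1), c t * 3 ^ t
          = 3 * (∑ t ∈ Finset.range n, c (t+1) * 3 ^ t) + c 0 := by
        intro c
        rw [Finset.sum_range_succ' (fun t => c t * 3 ^ t) n]
        rw [Finset.mul_sum]
        congr 1
        · apply Finset.sum_congr rfl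
          intro i _
          ring
        · ring
      rw [e b, e b'] at hsum
      have hb0 := hb 0 (by omega)
      have hb'0 := hb' 0 (by omega)
      have key : b 0 = b' 0 := by
        have h1 : (3 * (∑ t ∈ Finset.range n, b (t+1) * 3 ^ t) + b 0) % 3 = b 0 := by
          rw [Int.add_comm, Int.add_mul_emod_self_left, Int.emod_eq_of_lt hb0.1 hb0.2]
        have h2 : (3 * (∑ t ∈ Finset.range n, b' (t+1) * 3 ^ t) + b' 0) % 3 = b' 0 := by
          rw [Int.add_comm, Int.add_mul_emod_self_left, Int.emod_eq_of_lt hb'0.1 hb'0.2]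
        rw [← h1, ← h2, hsum]
      have hrest : ∑ t ∈ Finset.range n, b (t+1) * 3 ^ t
          = ∑ t ∈ Finset.range n, b' (t+1) * 3 ^ t := by omega
      rcases Nat.eq_zero_or_pos t with h0 | hpos
      · rw [h0]; exact key
      · obtain ⟨s, rfl⟩ : ∃ s, t = s + 1 := ⟨t - 1, by omega⟩
        exact ih (fun t => b (t+1)) (fun t => b' (t+1))
          (fun t htn => hb (t+1) (by omega)) (fun t htn => hb' (t+1) (by omega))
          hrest s (by omega)




variable {d : ℕ}

/-- extend `I : Fin d → ℕ` to `ℕ` by 1. -/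
def Jext (I : Fin d → ℕ) : ℕ → ℕ := fun t => if h : t < d then I ⟨t, h⟩ else 1

lemma Jext_pos {I : Fin d → ℕ} (hI : ∀ u, 1 ≤ I u) : ∀ t, 1 ≤ Jext I t := by
  intro t; unfold Jext; split
  · exact hI _
  · exact le_refl 1

lemma Jext_val (I : Fin d → ℕ) (u : Fin d) : Jext I u.val = I u := by
  simp [Jext, u.isLt]

lemma prodIio_eq (I : Fin d → ℕ) (u : Fin d) : prodIio I u = Q (Jext I) u.val := by
  unfold prodIio Q
  rw [show (Finset.range : ℕ → Finset ℕ) = Finset.Iio from funext fun a => (Nat.Iio_eq_range a).symm,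
    ← Fin.map_valEmbedding_Iio, Finset.prod_map]
  exact Finset.prod_congr rfl fun t _ => (Jext_val I t).symm

lemma prod_univ_eq (I : Fin d → ℕ) : ∏ u, I u = Q (Jext I) d := by
  rw [Q, ← Fin.prod_univ_eq_prod_range (Jext I) d]
  exact Finset.prod_congr rfl fun u _ => (Jext_val I u).symm

lemma iotaVec_digit {I : Fin d → ℕ} (j : ℕ) (u : Fin d) :
    iotaVec I j u =
      (if u.val = d - 1 then (j-1) / Q (Jext I) u.val
       else (j-1) / Q (Jext I) u.val % Jext I u.val) + 1 := by
  unfold iotaVec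
  rw [prodIio_eq, Jext_val]
  split
  · rfl
  · rw [← Nat.div_div_eq_div_mul, Nat.mod_def, Nat.mul_comm]

lemma iotaVec_ge_one {I : Fin d → ℕ} (j : ℕ) (u : Fin d) : 1 ≤ iotaVec I j u := by
  unfold iotaVec; split <;> exact Nat.le_add_left 1 _

lemma iotaVec_le {I : Fin d → ℕ} (hI : ∀ u, 1 ≤ I u) {j : ℕ} (hj : j ≤ ∏ u, I u)
    (u : Fin d) : iotaVec I j u ≤ I u := by
  have hJ := Jext_pos hI
  rw [iotaVec_digit]
  split
  next h =>
    have hd : 0 < d := u.pos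
    have hprod : ∏ u, I u = Q (Jext I) (d - 1) * Jext I (d - 1) := by
      rw [prod_univ_eq, ← Q_succ]
      congr 1
      omega
    have hlt : (j - 1) / Q (Jext I) u.val < Jext I u.val := by
      rw [h]
      apply Nat.div_lt_of_lt_mul
      have hQJ : 0 < Q (Jext I) (d-1) * Jext I (d-1) :=
        Nat.mul_pos (Q_pos hJ _) (hJ _)
      rw [hprod] at hj
      omega
    have := Jext_val I u
    omega
  next h =>
    have : (j-1) / Q (Jext I) u.val % Jext I u.val < Jext I u.val :=
      Nat.mod_lt _ (hJ _)
    have := Jext_val I u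
    omega


/-- extend a vector on `Fin d` to `ℕ` (by 1). -/
def vext (v : Fin d → ℕ) : ℕ → ℕ := fun t => if h : t < d then v ⟨t, h⟩ else 1

lemma vext_val (v : Fin d → ℕ) (u : Fin d) : vext v u.val = v u := by
  simp [vext, u.isLt]

lemma iotaInv_eq (I : Fin d → ℕ) (v : Fin d → ℕ) :
    iotaInv I v = 1 + ∑ t ∈ Finset.range d, (vext v t - 1) * Q (Jext I) t := by
  unfold iotaInv
  congr 1
  rw [← Fin.sum_univ_eq_sum_range (fun t => (vext v t - 1) * Q (Jext I) t) d]
  exact Finset.sum_congr rfl fun u _ => by rw [vext_val, prodIio_eq]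

lemma roundtrip_inv_vec {I : Fin d → ℕ} (hI : ∀ u, 1 ≤ I u) (hd : 1 ≤ d)
    {j : ℕ} (hj : 1 ≤ j) : iotaInv I (iotaVec I j) = j := by
  have hJ := Jext_pos hI
  rw [iotaInv_eq]
  have hsum : ∑ t ∈ Finset.range d, (vext (iotaVec I j) t - 1) * Q (Jext I) t
      = ∑ t ∈ Finset.range d,
          (if t = d - 1 then (j-1) / Q (Jext I) t
           else (j-1) / Q (Jext I) t % Jext I t) * Q (Jext I) t := by
    apply Finset.sum_congr rfl
    intro t ht
    have htd : t < d := Finset.mem_range.mp ht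
    have : vext (iotaVec I j) t = iotaVec I j ⟨t, htd⟩ := by simp [vext, htd]
    rw [this, iotaVec_digit]
    simp
  rw [hsum]
  obtain ⟨m, rfl⟩ : ∃ m, d = m + 1 := ⟨d - 1, by omega⟩
  simp only [Nat.add_sub_cancel]
  rw [Finset.sum_range_succ]
  have h1 : ∑ t ∈ Finset.range m,
      (if t = m then (j-1) / Q (Jext I) t
       else (j-1) / Q (Jext I) t % Jext I t) * Q (Jext I) t
      = ∑ t ∈ Finset.range m, ((j-1) / Q (Jext I) t % Jext I t) * Q (Jext I) t := by
    apply Finset.sum_congr rfl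
    intro t ht
    have := Finset.mem_range.mp ht
    rw [if_neg (by omega)]
  rw [h1, if_pos rfl, ← modsum (Jext I) (j-1) m]
  have h2 : (j - 1) % Q (Jext I) m + (j-1) / Q (Jext I) m * Q (Jext I) m
      = j - 1 := Nat.mod_add_div' (j-1) (Q (Jext I) m)
  omega

lemma roundtrip_vec_inv {I : Fin d → ℕ} (hI : ∀ u, 1 ≤ I u)
    {v : Fin d → ℕ} (hv : ∀ u, 1 ≤ v u ∧ v u ≤ I u) (u : Fin d) :
    iotaVec I (iotaInv I v) u = v u := by
  have hJ := Jext_pos hI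
  have hblt : ∀ t < d, (fun t => vext v t - 1) t < Jext I t := by
    intro t ht
    have h1 := (hv ⟨t, ht⟩).1
    have h2 := (hv ⟨t, ht⟩).2
    simp only [vext, Jext, dif_pos ht]
    omega
  have ha : iotaInv I v - 1 = ∑ t ∈ Finset.range d, (vext v t - 1) * Q (Jext I) t := by
    rw [iotaInv_eq]; omega
  rw [iotaVec_digit, ha]
  have hbu : vext v u.val - 1 = v u - 1 := by rw [vext_val]
  have hv1 := (hv u).1
  split
  next h =>
    have hd : 0 < d := u.pos
    rw [h, div_top_digit hJ hd (fun t ht => hblt t (by omega)), ← h, hbu]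
    omega
  next h =>
    rw [div_mod_digit hJ u.isLt hblt, hbu]
    omega

lemma iotaInvZ_cast {I : Fin d → ℕ} {v : Fin d → ℕ} (hv : ∀ u, 1 ≤ v u) :
    iotaInvZ I (fun u => (v u : ℤ)) = (iotaInv I v : ℤ) := by
  unfold iotaInvZ iotaInv
  push_cast
  congr 1
  apply Finset.sum_congr rfl
  intro u _
  rw [Nat.cast_sub (hv u)]
  simp only [prodIio, Nat.cast_prod, Nat.cast_one]

lemma iotaInvZ_three (v : Fin d → ℤ) :
    iotaInvZ (fun _ : Fin d => 3) v
      = 1 + ∑ u : Fin d, (v u - 1) * 3 ^ (u.val : ℕ) := by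
  unfold iotaInvZ
  congr 1
  apply Finset.sum_congr rfl
  intro u _
  rw [Finset.prod_const, Fin.card_Iio]
  norm_num

/-- extend an integer vector minus one to ℕ (by 0). -/
def bZ (v : Fin d → ℤ) : ℕ → ℤ := fun t => if h : t < d then v ⟨t, h⟩ - 1 else 0

lemma iotaInvZ_three_range (v : Fin d → ℤ) :
    iotaInvZ (fun _ : Fin d => 3) v
      = 1 + ∑ t ∈ Finset.range d, bZ v t * 3 ^ t := by
  rw [iotaInvZ_three]
  congr 1
  rw [← Fin.sum_univ_eq_sum_range (fun t => bZ v t * 3 ^ t) d]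
  apply Finset.sum_congr rfl
  intro u _
  simp [bZ, u.isLt]

lemma iotaInvZ_three_inj {v v' : Fin d → ℤ}
    (hv : ∀ u, 1 ≤ v u ∧ v u ≤ 3) (hv' : ∀ u, 1 ≤ v' u ∧ v' u ≤ 3)
    (h : iotaInvZ (fun _ : Fin d => 3) v = iotaInvZ (fun _ : Fin d => 3) v') :
    ∀ u, v u = v' u := by
  intro u
  rw [iotaInvZ_three_range, iotaInvZ_three_range] at h
  have hsum : ∑ t ∈ Finset.range d, bZ v t * 3 ^ t
      = ∑ t ∈ Finset.range d, bZ v' t * 3 ^ t := by omega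
  have := int_digits_inj d (bZ v) (bZ v')
    (fun t ht => by have := hv ⟨t, ht⟩; simp only [bZ, dif_pos ht]; omega)
    (fun t ht => by have := hv' ⟨t, ht⟩; simp only [bZ, dif_pos ht]; omega)
    hsum u.val u.isLt
  simp only [bZ, dif_pos u.isLt, Fin.eta] at this
  omega


end Stmt14Aux

theorem stmt14 (d : ℕ) (hd : 1 ≤ d) (I : Fin d → ℕ) (hI : ∀ u, 1 ≤ I u)
    (rc : ℝ) (hrc : 0 < rc) (Dmin : Fin d → ℝ)
    (w l : ℕ) (hw : 1 ≤ w ∧ w ≤ ∏ u, I u) (hl : 1 ≤ l ∧ l ≤ 3 ^ d)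
    (hbeta : betaDef I w l)
    (x : Fin d → ℝ)
    (hrange : ∀ u, 1 ≤ ⌊(x u - Dmin u) / rc⌋ - (iotaVec I (beta I w l) u : ℤ) + 3 ∧
        ⌊(x u - Dmin u) / rc⌋ - (iotaVec I (beta I w l) u : ℤ) + 3 ≤ 3)
    (hassign : iotaInvZ (fun _ => 3) (fun u => 4 - (iota3 d l u : ℤ)) =
      iotaInvZ (fun _ => 3)
        (fun u => ⌊(x u - Dmin u) / rc⌋ - (iotaVec I (beta I w l) u : ℤ) + 3)) :
    (w : ℤ) = iotaInvZ I (fun u => ⌊(x u - Dmin u) / rc⌋ + 1) := by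
  have hβvec : ∀ u, iotaVec I (beta I w l) u = betaVec I w l u :=
    Stmt14Aux.roundtrip_vec_inv hI hbeta
  have h3 : ∀ u, 1 ≤ iota3 d l u ∧ iota3 d l u ≤ 3 := by
    intro u
    refine ⟨Stmt14Aux.iotaVec_ge_one l u, ?_⟩
    apply Stmt14Aux.iotaVec_le (I := fun _ : Fin d => (3:ℕ)) (fun _ => by norm_num)
    have : ∏ _u : Fin d, (3:ℕ) = 3 ^ d := by
      simp [Finset.prod_const, Finset.card_univ]
    rw [this]
    exact hl.2
  have hcomp : ∀ u, 4 - (iota3 d l u : ℤ)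
      = ⌊(x u - Dmin u) / rc⌋ - (iotaVec I (beta I w l) u : ℤ) + 3 := by
    apply Stmt14Aux.iotaInvZ_three_inj ?_ ?_ hassign
    · intro u; have := h3 u; omega
    · intro u; exact hrange u
  have hw1 : ∀ u, 1 ≤ iotaVec I w u := fun u => Stmt14Aux.iotaVec_ge_one w u
  have hcast : ∀ u, (betaVec I w l u : ℤ)
      = (iotaVec I w u : ℤ) + (iota3 d l u : ℤ) - 2 := by
    intro u
    have h2 : 2 ≤ iotaVec I w u + iota3 d l u := by
      have := hw1 u; have := (h3 u).1; omega
    unfold betaVec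
    rw [Nat.cast_sub h2]
    push_cast
    ring
  have hfinal : ∀ u, ⌊(x u - Dmin u) / rc⌋ + 1 = ((iotaVec I w u : ℕ) : ℤ) := by
    intro u
    have h1 := hcomp u
    have h2 := hβvec u
    have h3' := hcast u
    rw [h2] at h1
    omega
  have : (fun u => ⌊(x u - Dmin u) / rc⌋ + 1) = fun u => ((iotaVec I w u : ℕ) : ℤ) :=
    funext hfinal
  rw [this, Stmt14Aux.iotaInvZ_cast hw1,
    Stmt14Aux.roundtrip_inv_vec hI hd hw.1]
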